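/- Let p ∈ (1,∞] and let X denote either W^{1,p} or C^{0,1−1/p}. Suppose the delay system ẋ(t) = f(x_t) is forward complete on C⁰. Consider the properties: (UGAS) there exists σ ∈ KL with ‖φ(t,x₀)‖_∞ ≤ σ(‖x₀‖_∞, t) for all t ≥ 0 and x₀ ∈ C⁰; (Q-X) there exists σ ∈ KL with ‖φ(t,x₀)‖_∞ ≤ σ(‖x₀‖_X, t) for all t ≥ 0 and x₀ ∈ X; (UGAS-X) there exists σ ∈ KL with ‖φ(t,x₀)‖_X ≤ σ(‖x₀‖_X, t) for all t ≥ 0 and x₀ ∈ X. Then (UGAS) implies (Q-X), and (Q-X) holds if and only if (UGAS-X) holds. -/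

import Mathlib

open Set MeasureTheory Filter Topology
open scoped ENNReal NNReal

noncomputable section

abbrev Vec (n : ℕ) := EuclideanSpace ℝ (Fin n)

variable {n : ℕ}

/-- The segment `x_t` of a history `x : ℝ → ℝⁿ`, i.e. `x_t(s) = x(t+s)`
(only its values on `[-r,0]` are relevant). -/
def seg (r : ℝ) (x : ℝ → Vec n) (t : ℝ) : ℝ → Vec n := fun s => x (t + s)

/-- Sup norm over `[-r,0]`. -/
def supN (r : ℝ) (g : ℝ → Vec n) : ℝ := sSup ((fun s => ‖g s‖) '' Icc (-r) 0)

/-- Membership in `C⁰ = C([-r,0];ℝⁿ)`. -/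
def MemC0 (r : ℝ) (g : ℝ → Vec n) : Prop := ContinuousOn g (Icc (-r) 0)

/-- `f` vanishes at `0`, depends only on the values of its argument on `[-r,0]`,
and is Lipschitz on bounded subsets of `C⁰` with a nondecreasing (nonnegative)
modulus `L`. -/
def GoodRHS (r : ℝ) (f : (ℝ → Vec n) → Vec n) (L : ℝ → ℝ) : Prop :=
  f 0 = 0 ∧
  (∀ x y : ℝ → Vec n, EqOn x y (Icc (-r) 0) → f x = f y) ∧
  Monotone L ∧ (∀ s : ℝ, 0 ≤ L s) ∧
  ∀ R : ℝ, ∀ x y : ℝ → Vec n, MemC0 r x → MemC0 r y → supN r x ≤ R → supN r y ≤ R →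
    ‖f x - f y‖ ≤ L R * supN r (x - y)

/-- `x : ℝ → ℝⁿ` is a solution on `[-r, b)` (with `b ∈ (0,∞]` an extended
nonnegative real) of the delay system `ẋ(t) = f(x_t)` with initial condition `x0`:
it is continuous on `[-r,b)`, coincides with `x0` on `[-r,0]`, and satisfies the
integral equation `x(t) = x(0) + ∫₀ᵗ f(x_s) ds` on `[0,b)`. -/
def IsSol (r : ℝ) (f : (ℝ → Vec n) → Vec n) (x0 x : ℝ → Vec n) (b : ℝ≥0∞) : Prop :=
  ContinuousOn x {t : ℝ | -r ≤ t ∧ ENNReal.ofReal t < b} ∧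
  EqOn x x0 (Icc (-r) 0) ∧
  ∀ t : ℝ, 0 ≤ t → ENNReal.ofReal t < b → x t = x 0 + ∫ s in (0:ℝ)..t, f (seg r x s)

/-- Class `KL` functions `σ : [0,∞)×[0,∞) → [0,∞)`. -/
def ClassKL (σ : ℝ → ℝ → ℝ) : Prop :=
  (∀ s t : ℝ, 0 ≤ s → 0 ≤ t → 0 ≤ σ s t) ∧
  (∀ t : ℝ, 0 ≤ t →
    ContinuousOn (fun s => σ s t) (Ici 0) ∧ StrictMonoOn (fun s => σ s t) (Ici 0) ∧
      σ 0 t = 0) ∧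
  (∀ s : ℝ, 0 ≤ s →
    AntitoneOn (fun t => σ s t) (Ici 0) ∧ Tendsto (fun t => σ s t) atTop (nhds 0))

/-- Class `K∞` functions `a : [0,∞) → [0,∞)`. -/
def ClassKInf (a : ℝ → ℝ) : Prop :=
  (∀ s : ℝ, 0 ≤ s → 0 ≤ a s) ∧ ContinuousOn a (Ici 0) ∧ StrictMonoOn a (Ici 0) ∧
  a 0 = 0 ∧ Tendsto a atTop atTop

/-- The set of Hölder difference quotients `‖g t - g s‖ / |t-s|^α` over a set `S`. -/
def hRatios (α : ℝ) (S : Set ℝ) (g : ℝ → Vec n) : Set ℝ :=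
  {c | ∃ t ∈ S, ∃ s ∈ S, t ≠ s ∧ c = ‖g t - g s‖ / |t - s| ^ α}

/-- Membership in the Hölder space `C^{0,α}([-r,0])`. -/
def MemHol (r α : ℝ) (g : ℝ → Vec n) : Prop :=
  MemC0 r g ∧ BddAbove (hRatios α (Icc (-r) 0) g)

/-- The Hölder norm `max(‖g‖_∞, [g]_α)`. -/
def holderNorm (r α : ℝ) (g : ℝ → Vec n) : ℝ :=
  max (supN r g) (sSup (hRatios α (Icc (-r) 0) g))

/-- Membership in the Sobolev space `W^{1,p}([-r,0])`: `g` is absolutely continuous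
on `[-r,0]` (i.e. the integral of an integrable function `d`, which is then its a.e.
derivative) with `d ∈ L^p((-r,0))`. -/
def MemW (r : ℝ) (p : ℝ≥0∞) (g : ℝ → Vec n) : Prop :=
  ∃ d : ℝ → Vec n, IntegrableOn d (Icc (-r) 0) ∧
    eLpNorm d p (volume.restrict (Ioo (-r) 0)) < ⊤ ∧
    ∀ t ∈ Icc (-r) 0, g t = g (-r) + ∫ s in (-r)..t, d s

/-- The Sobolev norm `‖g‖_∞ + ‖ġ‖_p`; for an absolutely continuous `g` the a.e.
derivative coincides a.e. on `(-r,0)` with `deriv g`. -/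
def sobNorm (r : ℝ) (p : ℝ≥0∞) (g : ℝ → Vec n) : ℝ :=
  supN r g + (eLpNorm (deriv g) p (volume.restrict (Ioo (-r) 0))).toReal

/-- The Hölder exponent `1 - 1/p`, with the convention `1/∞ = 0`. -/
def hexp (p : ℝ≥0∞) : ℝ := 1 - (p.toReal)⁻¹

section Basics

variable {n : ℕ}

lemma supN_nonneg (r : ℝ) (g : ℝ → Vec n) : 0 ≤ supN r g :=
  Real.sSup_nonneg (by rintro x ⟨s, _, rfl⟩; exact norm_nonneg _)

lemma supN_le {r : ℝ} {g : ℝ → Vec n} {M : ℝ} (hM : 0 ≤ M)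
    (h : ∀ s ∈ Icc (-r) 0, ‖g s‖ ≤ M) : supN r g ≤ M :=
  Real.sSup_le (by rintro x ⟨s, hs, rfl⟩; exact h s hs) hM

lemma bddAbove_norm_image {r : ℝ} {g : ℝ → Vec n} (hg : MemC0 r g) :
    BddAbove ((fun s => ‖g s‖) '' Icc (-r) 0) :=
  (isCompact_Icc.image_of_continuousOn (continuous_norm.comp_continuousOn hg)).bddAbove

lemma le_supN {r : ℝ} {g : ℝ → Vec n} (hg : MemC0 r g) {s : ℝ} (hs : s ∈ Icc (-r) 0) :
    ‖g s‖ ≤ supN r g := le_csSup (bddAbove_norm_image hg) ⟨s, hs, rfl⟩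

lemma supN_zero (r : ℝ) : supN r (0 : ℝ → Vec n) = 0 :=
  le_antisymm (supN_le le_rfl (by simp)) (supN_nonneg r 0)

lemma memC0_zero (r : ℝ) : MemC0 r (0 : ℝ → Vec n) := continuousOn_const

lemma sSup_hRatios_nonneg (α : ℝ) (S : Set ℝ) (g : ℝ → Vec n) : 0 ≤ sSup (hRatios α S g) :=
  Real.sSup_nonneg (by rintro c ⟨t, _, s, _, _, rfl⟩; positivity)

lemma sSup_hRatios_le {α : ℝ} {S : Set ℝ} {g : ℝ → Vec n} {M : ℝ} (hM : 0 ≤ M)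
    (h : ∀ t ∈ S, ∀ s ∈ S, t ≠ s → ‖g t - g s‖ / |t - s| ^ α ≤ M) :
    sSup (hRatios α S g) ≤ M :=
  Real.sSup_le (by rintro c ⟨t, ht, s, hs, hts, rfl⟩; exact h t ht s hs hts) hM

lemma memW_memC0 {r : ℝ} {p : ℝ≥0∞} {g : ℝ → Vec n} (hg : MemW r p g) : MemC0 r g := by
  obtain ⟨d, hdint, -, hrep⟩ := hg
  have h1 : ContinuousOn (fun t => g (-r) + ∫ s in (-r)..t, d s) (Icc (-r) 0) := by
    apply ContinuousOn.add continuousOn_const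
    have := intervalIntegral.continuousOn_primitive (a := -r) (b := 0) (μ := volume) hdint
    apply this.congr
    intro t ht
    simp only [intervalIntegral.integral_of_le ht.1]
  exact h1.congr hrep

lemma supN_le_sobNorm (r : ℝ) (p : ℝ≥0∞) (g : ℝ → Vec n) : supN r g ≤ sobNorm r p g :=
  le_add_of_nonneg_right ENNReal.toReal_nonneg

lemma supN_le_holderNorm (r α : ℝ) (g : ℝ → Vec n) : supN r g ≤ holderNorm r α g :=
  le_max_left _ _

end Basics
section Sol

variable {n : ℕ}

lemma isSol_continuousOn {r : ℝ} {f : (ℝ → Vec n) → Vec n} {x0 x : ℝ → Vec n}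
    (hsol : IsSol r f x0 x ⊤) : ContinuousOn x (Ici (-r)) := by
  have := hsol.1
  have hset : {t : ℝ | -r ≤ t ∧ ENNReal.ofReal t < (⊤ : ℝ≥0∞)} = Ici (-r) := by
    ext t; simp [ENNReal.ofReal_lt_top]
  rwa [hset] at this

lemma seg_memC0 {r : ℝ} {x : ℝ → Vec n} (hx : ContinuousOn x (Ici (-r)))
    {t : ℝ} (ht : 0 ≤ t) : MemC0 r (seg r x t) := by
  apply hx.comp (Continuous.continuousOn (by fun_prop))
  intro u hu
  simp only [mem_Ici]
  linarith [hu.1, hu.2]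

/-- Continuity of `s ↦ f (x_s)` on `[0,∞)`. -/
lemma fseg_continuousOn {r : ℝ} (hr : 0 < r) {f : (ℝ → Vec n) → Vec n} {L : ℝ → ℝ}
    (hf : GoodRHS r f L) {x : ℝ → Vec n} (hx : ContinuousOn x (Ici (-r))) :
    ContinuousOn (fun s => f (seg r x s)) (Ici 0) := by
  obtain ⟨hf0, hdep, hLmono, hLnn, hlip⟩ := hf
  intro s₀ hs₀
  simp only [mem_Ici] at hs₀
  rw [Metric.continuousWithinAt_iff]
  intro ε hε
  -- bound for the sup norm of x on [-r, s₀+1]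
  have hsub : Icc (-r) (s₀ + 1) ⊆ Ici (-r) := Icc_subset_Ici_self
  have hK : IsCompact (Icc (-r) (s₀ + 1)) := isCompact_Icc
  have hne : (-r) ≤ s₀ + 1 := by linarith
  have hbdd : BddAbove ((fun u => ‖x u‖) '' Icc (-r) (s₀ + 1)) :=
    (hK.image_of_continuousOn (continuous_norm.comp_continuousOn (hx.mono hsub))).bddAbove
  set R : ℝ := sSup ((fun u => ‖x u‖) '' Icc (-r) (s₀ + 1)) with hR
  have hRle : ∀ u ∈ Icc (-r) (s₀ + 1), ‖x u‖ ≤ R := fun u hu => le_csSup hbdd ⟨u, hu, rfl⟩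
  have hR0 : 0 ≤ R := le_trans (norm_nonneg _) (hRle 0 ⟨by linarith, by linarith⟩)
  -- uniform continuity of x on [-r, s₀+1]
  have hunif : UniformContinuousOn x (Icc (-r) (s₀ + 1)) :=
    hK.uniformContinuousOn_of_continuous (hx.mono hsub)
  rw [Metric.uniformContinuousOn_iff] at hunif
  have hLR1 : 0 < L R + 1 := by linarith [hLnn R]
  have hεpos : 0 < ε / (L R + 1) := div_pos hε hLR1
  obtain ⟨δ, hδ, hδε⟩ := hunif (ε / (L R + 1)) hεpos
  refine ⟨min δ 1, lt_min hδ one_pos, ?_⟩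
  intro s hs hd
  simp only [mem_Ici] at hs
  rw [dist_eq_norm]
  have hdist : |s - s₀| < min δ 1 := by rwa [Real.dist_eq] at hd
  have hs1 : s ≤ s₀ + 1 := by
    have := abs_lt.1 (lt_of_lt_of_le hdist (min_le_right _ _)); linarith [this.2]
  have hmem : ∀ u ∈ Icc (-r) (0:ℝ), s + u ∈ Icc (-r) (s₀ + 1) := by
    intro u hu; exact ⟨by linarith [hu.1], by linarith [hu.2]⟩
  have hmem₀ : ∀ u ∈ Icc (-r) (0:ℝ), s₀ + u ∈ Icc (-r) (s₀ + 1) := by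
    intro u hu; exact ⟨by linarith [hu.1], by linarith [hu.2]⟩
  have hsups : supN r (seg r x s) ≤ R :=
    supN_le hR0 (fun u hu => hRle _ (hmem u hu))
  have hsups₀ : supN r (seg r x s₀) ≤ R :=
    supN_le hR0 (fun u hu => hRle _ (hmem₀ u hu))
  have hlipest := hlip R (seg r x s) (seg r x s₀) (seg_memC0 hx hs) (seg_memC0 hx hs₀)
    hsups hsups₀
  have hsupdiff : supN r (seg r x s - seg r x s₀) ≤ ε / (L R + 1) := by
    apply supN_le hεpos.le
    intro u hu
    have := hδε _ (hmem u hu) _ (hmem₀ u hu) (by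
      rw [Real.dist_eq]
      have : s + u - (s₀ + u) = s - s₀ := by ring
      rw [this]
      exact lt_of_lt_of_le hdist (min_le_left _ _))
    rw [dist_eq_norm] at this
    exact le_of_lt this
  calc ‖f (seg r x s) - f (seg r x s₀)‖ ≤ L R * supN r (seg r x s - seg r x s₀) := hlipest
    _ ≤ L R * (ε / (L R + 1)) :=
        mul_le_mul_of_nonneg_left hsupdiff (hLnn R)
    _ < ε := by
        rw [mul_div_assoc']
        rw [div_lt_iff₀ hLR1]
        have := hLnn R
        nlinarith

/-- Norm bound on `f (x_s)`. -/
lemma norm_fseg_le {r : ℝ} {f : (ℝ → Vec n) → Vec n} {L : ℝ → ℝ}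
    (hf : GoodRHS r f L) {x : ℝ → Vec n} {s R : ℝ}
    (hseg : MemC0 r (seg r x s)) (hsup : supN r (seg r x s) ≤ R) (hR : 0 ≤ R) :
    ‖f (seg r x s)‖ ≤ L R * supN r (seg r x s) := by
  obtain ⟨hf0, hdep, hLmono, hLnn, hlip⟩ := hf
  have := hlip R (seg r x s) 0 hseg (memC0_zero r) hsup (by rw [supN_zero]; exact hR)
  rw [hf0, sub_zero, sub_zero] at this
  exact this

lemma sol_hasDerivAt {r : ℝ} (hr : 0 < r) {f : (ℝ → Vec n) → Vec n} {L : ℝ → ℝ}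
    (hf : GoodRHS r f L) {x0 x : ℝ → Vec n} (hsol : IsSol r f x0 x ⊤)
    {u : ℝ} (hu : 0 < u) : HasDerivAt x (f (seg r x u)) u := by
  have hx := isSol_continuousOn hsol
  have hg := fseg_continuousOn hr hf hx
  have hgIoi : ContinuousOn (fun s => f (seg r x s)) (Ioi 0) := hg.mono Ioi_subset_Ici_self
  have hint : IntervalIntegrable (fun s => f (seg r x s)) volume 0 u := by
    apply ContinuousOn.intervalIntegrable
    apply hg.mono
    rw [uIcc_of_le hu.le]
    exact Icc_subset_Ici_self
  have h1 : HasDerivAt (fun t => ∫ s in (0:ℝ)..t, f (seg r x s)) (f (seg r x u)) u :=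
    intervalIntegral.integral_hasDerivAt_right hint
      (hgIoi.stronglyMeasurableAtFilter isOpen_Ioi u hu)
      (hg.continuousAt (Ici_mem_nhds hu))
  have h2 : HasDerivAt (fun t => x 0 + ∫ s in (0:ℝ)..t, f (seg r x s)) (f (seg r x u)) u :=
    h1.const_add (x 0)
  apply h2.congr_of_eventuallyEq
  filter_upwards [Ioi_mem_nhds hu] with t ht
  exact hsol.2.2 t (le_of_lt ht) (by simp [ENNReal.ofReal_lt_top])

lemma sol_increment {r : ℝ} (hr : 0 < r) {f : (ℝ → Vec n) → Vec n} {L : ℝ → ℝ}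
    (hf : GoodRHS r f L) {x0 x : ℝ → Vec n} (hsol : IsSol r f x0 x ⊤)
    {a b M : ℝ} (h0a : 0 ≤ a) (hab : a ≤ b)
    (hM : ∀ s ∈ Icc a b, ‖f (seg r x s)‖ ≤ M) : ‖x b - x a‖ ≤ M * (b - a) := by
  have hx := isSol_continuousOn hsol
  have hg := fseg_continuousOn hr hf hx
  have hia : IntervalIntegrable (fun s => f (seg r x s)) volume 0 a := by
    apply ContinuousOn.intervalIntegrable
    apply hg.mono; rw [uIcc_of_le h0a]; exact Icc_subset_Ici_self
  have hib : IntervalIntegrable (fun s => f (seg r x s)) volume 0 b := by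
    apply ContinuousOn.intervalIntegrable
    apply hg.mono; rw [uIcc_of_le (h0a.trans hab)]; exact Icc_subset_Ici_self
  have hxa := hsol.2.2 a h0a (by simp [ENNReal.ofReal_lt_top])
  have hxb := hsol.2.2 b (h0a.trans hab) (by simp [ENNReal.ofReal_lt_top])
  have hdiff : x b - x a = ∫ s in a..b, f (seg r x s) := by
    rw [hxa, hxb, add_sub_add_left_eq_sub]
    exact intervalIntegral.integral_interval_sub_left hib hia
  rw [hdiff]
  have := intervalIntegral.norm_integral_le_of_norm_le_const (C := M)
    (f := fun s => f (seg r x s)) (a := a) (b := b) ?_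
  · rwa [abs_of_nonneg (by linarith)] at this
  · intro s hs
    rw [uIoc_of_le hab] at hs
    exact hM s ⟨le_of_lt hs.1, hs.2⟩

end Sol
section Lebesgue

variable {n : ℕ}

open scoped Interval

lemma memW_eLpNorm_deriv_lt_top {r : ℝ} (hr : 0 < r) {p : ℝ≥0∞} {g : ℝ → Vec n}
    (hg : MemW r p g) : eLpNorm (deriv g) p (volume.restrict (Ioo (-r) 0)) < ⊤ := by
  obtain ⟨d, hdint, hdlp, hrep⟩ := hg
  set d' : ℝ → Vec n := (Icc (-r) 0).indicator d with hd'def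
  have hd'int : Integrable d' volume := (integrable_indicator_iff measurableSet_Icc).2 hdint
  have hleb := IsUnifLocDoublingMeasure.ae_tendsto_average_norm_sub (μ := volume)
      hd'int.locallyIntegrable 1
  have key : ∀ᵐ u ∂(volume.restrict (Ioo (-r) 0)), deriv g u = d u := by
    filter_upwards [ae_restrict_of_ae hleb, ae_restrict_mem measurableSet_Ioo] with u hu huIoo
    have huIcc : u ∈ Icc (-r) 0 := Ioo_subset_Icc_self huIoo
    have hδ : Tendsto (fun v : ℝ => |v - u|) (𝓝[≠] u) (𝓝[>] 0) := by
      rw [tendsto_nhdsWithin_iff]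
      constructor
      · have h1 : Tendsto (fun v : ℝ => |v - u|) (𝓝 u) (𝓝 |u - u|) :=
          ((continuous_id.sub continuous_const).abs).continuousAt
        simpa using h1.mono_left nhdsWithin_le_nhds
      · filter_upwards [self_mem_nhdsWithin] with v hv
        simpa using abs_pos.2 (sub_ne_zero.2 hv)
    have havg : Tendsto (fun v => ⨍ y in Metric.closedBall u |v - u|, ‖d' y - d' u‖)
        (𝓝[≠] u) (𝓝 0) := by
      apply hu (fun _ => u) (fun v => |v - u|) hδ
      filter_upwards with v
      exact Metric.mem_closedBall_self (by positivity)
    have hii : ∀ v ∈ Icc (-r) (0:ℝ), IntervalIntegrable d volume (-r) v := by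
      intro v hv
      apply IntegrableOn.intervalIntegrable
      apply hdint.mono_set
      rw [uIcc_of_le hv.1]
      exact Icc_subset_Icc le_rfl hv.2
    have hbound : ∀ᶠ v in 𝓝[≠] u, dist (slope g u v) (d u) ≤
        2 * ⨍ y in Metric.closedBall u |v - u|, ‖d' y - d' u‖ := by
      filter_upwards [self_mem_nhdsWithin,
        mem_nhdsWithin_of_mem_nhds (Icc_mem_nhds huIoo.1 huIoo.2)] with v hvne hvIcc
      have hvne' : v ≠ u := hvne
      have hρ : 0 < |v - u| := abs_pos.2 (sub_ne_zero.2 hvne')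
      have hv1 : v - u ≤ |v - u| := le_abs_self _
      have hv2 : -|v - u| ≤ v - u := neg_abs_le _
      have hgv := hrep v hvIcc
      have hgu := hrep u huIcc
      have hdiff : g v - g u = ∫ s in u..v, d s := by
        rw [hgv, hgu, add_sub_add_left_eq_sub]
        exact intervalIntegral.integral_interval_sub_left (hii v hvIcc) (hii u huIcc)
      have hiuv : IntervalIntegrable d volume u v :=
        IntegrableOn.intervalIntegrable (hdint.mono_set (uIcc_subset_Icc huIcc hvIcc))
      have hslope : slope g u v - d u = (v - u)⁻¹ • (∫ s in u..v, (d s - d u)) := by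
        rw [intervalIntegral.integral_sub hiuv intervalIntegrable_const,
          intervalIntegral.integral_const, smul_sub, slope_def_module, hdiff,
          smul_smul, inv_mul_cancel₀ (sub_ne_zero.2 hvne'), one_smul]
      have hnorm1 : ‖∫ s in u..v, (d s - d u)‖ ≤ ∫ y in Ι u v, ‖d y - d u‖ :=
        intervalIntegral.norm_integral_le_integral_norm_uIoc
      have hsubIcc : Ι u v ⊆ Icc (-r) 0 :=
        Set.Ioc_subset_Icc_self.trans (uIcc_subset_Icc huIcc hvIcc)
      have hcongr : ∫ y in Ι u v, ‖d y - d u‖ = ∫ y in Ι u v, ‖d' y - d' u‖ := by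
        apply setIntegral_congr_fun measurableSet_uIoc
        intro y hy
        rw [hd'def]
        simp only [Set.indicator_of_mem (hsubIcc hy), Set.indicator_of_mem huIcc]
      have hsubBall : Ι u v ⊆ Metric.closedBall u |v - u| := by
        rw [Real.closedBall_eq_Icc]
        apply Set.Ioc_subset_Icc_self.trans
        apply Icc_subset_Icc
        · apply le_min <;> linarith
        · apply max_le <;> linarith
      have hmono : ∫ y in Ι u v, ‖d' y - d' u‖ ≤
          ∫ y in Metric.closedBall u |v - u|, ‖d' y - d' u‖ := by
        apply setIntegral_mono_set
        · exact ((hd'int.integrableOn.sub (integrableOn_const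
            (by rw [Real.volume_closedBall]; exact ENNReal.ofReal_ne_top))).norm)
        · exact Eventually.of_forall fun y => norm_nonneg _
        · exact HasSubset.Subset.eventuallyLE hsubBall
      have hball : ∫ y in Metric.closedBall u |v - u|, ‖d' y - d' u‖ =
          (2 * |v - u|) * ⨍ y in Metric.closedBall u |v - u|, ‖d' y - d' u‖ := by
        rw [setAverage_eq, measureReal_def, Real.volume_closedBall, ENNReal.toReal_ofReal (by positivity),
          smul_eq_mul, ← mul_assoc, mul_inv_cancel₀ (by positivity), one_mul]
      rw [dist_eq_norm, hslope, norm_smul, Real.norm_eq_abs, abs_inv]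
      calc |v - u|⁻¹ * ‖∫ s in u..v, (d s - d u)‖
          ≤ |v - u|⁻¹ * ((2 * |v - u|) * ⨍ y in Metric.closedBall u |v - u|, ‖d' y - d' u‖) := by
            apply mul_le_mul_of_nonneg_left _ (by positivity)
            rw [← hball]
            exact hnorm1.trans (le_of_eq_of_le hcongr hmono)
        _ = 2 * ⨍ y in Metric.closedBall u |v - u|, ‖d' y - d' u‖ := by
            field_simp
    have hsq : Tendsto (fun v => dist (slope g u v) (d u)) (𝓝[≠] u) (𝓝 0) :=
      squeeze_zero' (Eventually.of_forall fun v => dist_nonneg) hbound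
        (by simpa using havg.const_mul 2)
    have hderiv : HasDerivAt g (d u) u :=
      hasDerivAt_iff_tendsto_slope.2 (tendsto_iff_dist_tendsto_zero.2 hsq)
    exact hderiv.deriv
  rw [eLpNorm_congr_ae key]
  exact hdlp

end Lebesgue
section KLConstruct

/-- From a `KL` function `σ`, a monotone nonneg `L` and constants, build a `KL`
upper bound for `σ s t + K * L (σ s 0) * σ s (max (t-r) 0) + 2 s · 1_{t<r}`. -/
lemma KL_construct (σ : ℝ → ℝ → ℝ) (hσ : ClassKL σ) (L : ℝ → ℝ)
    (hLmono : Monotone L) (hLnn : ∀ s, 0 ≤ L s) (K r : ℝ) (hK : 0 ≤ K) (hr : 0 < r) :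
    ∃ B : ℝ → ℝ → ℝ, ClassKL B ∧ ∀ s t : ℝ, 0 ≤ s → 0 ≤ t →
      σ s t + K * L (σ s 0) * σ s (max (t - r) 0) + 2 * s * (if t < r then 1 else 0) ≤ B s t := by
  obtain ⟨hnn, hs_props, ht_props⟩ := hσ
  have hσ0 : ∀ t, 0 ≤ t → σ 0 t = 0 := fun t ht => (hs_props t ht).2.2
  have hmonos : ∀ t, 0 ≤ t → MonotoneOn (fun s => σ s t) (Ici 0) :=
    fun t ht => ((hs_props t ht).2.1).monotoneOn
  -- the majorant of L ∘ σ(·,0)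
  set Lh : ℝ → ℝ := fun u => L (σ (max u 0) 0) with hLh
  have hLhmono : Monotone Lh := by
    intro a b hab
    exact hLmono (hmonos 0 le_rfl (le_max_right a 0) (le_max_right b 0)
      (max_le_max hab le_rfl))
  have hLhnn : ∀ u, 0 ≤ Lh u := fun u => hLnn _
  have hLhint : ∀ a b : ℝ, IntervalIntegrable Lh volume a b := fun a b =>
    hLhmono.intervalIntegrable
  set D : ℝ → ℝ := fun c => ∫ u in c..(c + 1), Lh u with hD
  have hDval : ∀ c, D c = ∫ u in (0:ℝ)..1, Lh (u + c) := by
    intro c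
    show (∫ u in c..(c+1), Lh u) = _
    rw [intervalIntegral.integral_comp_add_right Lh c, zero_add, add_comm 1 c]
  have hDcont : Continuous D := by
    have h1 : ∀ c : ℝ, D c = (∫ u in (0:ℝ)..(c+1), Lh u) - ∫ u in (0:ℝ)..c, Lh u := by
      intro c
      rw [hD]
      exact (intervalIntegral.integral_interval_sub_left (hLhint 0 (c+1)) (hLhint 0 c)).symm
    have h2 : Continuous fun c : ℝ => (∫ u in (0:ℝ)..(c+1), Lh u) - ∫ u in (0:ℝ)..c, Lh u :=
      ((intervalIntegral.continuous_primitive hLhint 0).comp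
        (continuous_id.add continuous_const)).sub (intervalIntegral.continuous_primitive hLhint 0)
    exact h2.congr fun c => (h1 c).symm
  have hDmono : Monotone D := by
    intro a b hab
    rw [hDval a, hDval b]
    have hma : Monotone (fun u : ℝ => Lh (u + a)) := fun x y hxy => hLhmono (by linarith)
    have hmb : Monotone (fun u : ℝ => Lh (u + b)) := fun x y hxy => hLhmono (by linarith)
    apply intervalIntegral.integral_mono_on zero_le_one
      hma.intervalIntegrable hmb.intervalIntegrable
    intro u _
    exact hLhmono (by linarith)
  have hDnn : ∀ c, 0 ≤ D c := by
    intro c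
    rw [hD]
    apply intervalIntegral.integral_nonneg (by linarith)
    intro u _
    exact hLhnn u
  have hLhD : ∀ c, Lh c ≤ D c := by
    intro c
    have h1 : Lh c = ∫ _ in c..(c+1), Lh c := by
      rw [intervalIntegral.integral_const]
      simp
    rw [h1, hD]
    apply intervalIntegral.integral_mono_on (by linarith)
      intervalIntegrable_const (hLhint c (c+1))
    intro u hu
    exact hLhmono hu.1
  set B : ℝ → ℝ → ℝ := fun s t =>
    σ s t + K * D s * σ s (max (t - r) 0) + 2 * s * (if t < r then 1 else 0) with hB
  have hmax0 : ∀ t : ℝ, (0:ℝ) ≤ max (t - r) 0 := fun t => le_max_right _ _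
  have hBnn : ∀ s t : ℝ, 0 ≤ s → 0 ≤ t → 0 ≤ B s t := by
    intro s t hs ht
    have h1 := hnn s t hs ht
    have h2 := hnn s (max (t - r) 0) hs (hmax0 t)
    have h3 : (0:ℝ) ≤ (if t < r then (1:ℝ) else 0) := by split <;> norm_num
    have h4 : 0 ≤ K * D s * σ s (max (t - r) 0) := mul_nonneg (mul_nonneg hK (hDnn s)) h2
    have h5 : 0 ≤ 2 * s * (if t < r then (1:ℝ) else 0) := mul_nonneg (by linarith) h3
    simp only [hB]
    linarith
  refine ⟨B, ⟨hBnn, ?_, ?_⟩, ?_⟩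
  · -- properties in s for fixed t
    intro t ht
    refine ⟨?_, ?_, ?_⟩
    · apply ContinuousOn.add
      apply ContinuousOn.add ((hs_props t ht).1)
      · exact (((continuous_const.mul hDcont).continuousOn).mul ((hs_props _ (hmax0 t)).1))
      · exact (continuous_const.mul continuous_id).mul continuous_const |>.continuousOn
    · intro a ha b hb hab
      simp only [hB]
      have h1 : σ a t < σ b t := (hs_props t ht).2.1 ha hb hab
      have h2 : K * D a * σ a (max (t - r) 0) ≤ K * D b * σ b (max (t - r) 0) := by
        apply mul_le_mul
        · exact mul_le_mul_of_nonneg_left (hDmono hab.le) hK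
        · exact hmonos _ (hmax0 t) ha hb hab.le
        · exact hnn a _ ha (hmax0 t)
        · exact mul_nonneg hK (hDnn b)
      have h3 : 2 * a * (if t < r then (1:ℝ) else 0) ≤ 2 * b * (if t < r then 1 else 0) := by
        apply mul_le_mul_of_nonneg_right (by linarith)
        split <;> norm_num
      linarith
    · simp only [hB, hσ0 t ht, hσ0 _ (hmax0 t)]
      ring
  · -- properties in t for fixed s
    intro s hs
    constructor
    · intro t ht t' ht' htt'
      simp only [hB]
      have h1 : σ s t' ≤ σ s t := (ht_props s hs).1 ht ht' htt'
      have h2 : σ s (max (t' - r) 0) ≤ σ s (max (t - r) 0) := by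
        apply (ht_props s hs).1 (hmax0 t) (hmax0 t')
        exact max_le_max (by linarith) le_rfl
      have h3 : (if t' < r then (1:ℝ) else 0) ≤ (if t < r then 1 else 0) := by
        by_cases h : t' < r
        · simp [h, show t < r by linarith [mem_Ici.1 ht]]
        · simp only [h, if_false]
          split <;> norm_num
      have h2' : K * D s * σ s (max (t' - r) 0) ≤ K * D s * σ s (max (t - r) 0) :=
        mul_le_mul_of_nonneg_left h2 (mul_nonneg hK (hDnn s))
      have h3' : 2 * s * (if t' < r then (1:ℝ) else 0) ≤ 2 * s * (if t < r then 1 else 0) :=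
        mul_le_mul_of_nonneg_left h3 (by linarith)
      linarith
    · have h1 : Tendsto (fun t => σ s t) atTop (𝓝 0) := (ht_props s hs).2
      have hτ : Tendsto (fun t : ℝ => max (t - r) 0) atTop atTop :=
        tendsto_atTop_mono (fun t => le_max_left _ _)
          (tendsto_atTop_add_const_right atTop (-r) tendsto_id)
      have h2 : Tendsto (fun t => K * D s * σ s (max (t - r) 0)) atTop (𝓝 0) := by
        have := ((ht_props s hs).2.comp hτ).const_mul (K * D s)
        simpa using this
      have h3 : Tendsto (fun t => 2 * s * (if t < r then (1:ℝ) else 0)) atTop (𝓝 0) := by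
        apply Tendsto.congr' _ tendsto_const_nhds
        filter_upwards [eventually_ge_atTop r] with t hrt
        simp [not_lt.2 hrt]
      have h4 := (h1.add h2).add h3
      simp only [add_zero] at h4
      exact h4
  · intro s t hs ht
    simp only [hB]
    have h1 : L (σ s 0) ≤ D s := by
      have h := hLhD s
      simp only [hLh, max_eq_left hs] at h
      exact h
    have h2 : K * L (σ s 0) * σ s (max (t - r) 0) ≤ K * D s * σ s (max (t - r) 0) := by
      apply mul_le_mul_of_nonneg_right (mul_le_mul_of_nonneg_left h1 hK)
      exact hnn s _ hs (hmax0 t)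
    linarith

end KLConstruct
section MainEst

variable {n : ℕ}

lemma sol_facts {r : ℝ} (hr : 0 < r) {f : (ℝ → Vec n) → Vec n} {L : ℝ → ℝ}
    (hf : GoodRHS r f L) {x0 x : ℝ → Vec n} (hsol : IsSol r f x0 x ⊤)
    {σ : ℝ → ℝ → ℝ} (hσ : ClassKL σ) {c : ℝ} (hc : 0 ≤ c)
    (hbound : ∀ s : ℝ, 0 ≤ s → supN r (seg r x s) ≤ σ c s) :
    ∀ s : ℝ, 0 ≤ s → ‖f (seg r x s)‖ ≤ L (σ c 0) * σ c s := by
  intro s hs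
  have hx := isSol_continuousOn hsol
  have hanti : AntitoneOn (fun t => σ c t) (Ici 0) := (hσ.2.2 c hc).1
  have hR0 : 0 ≤ σ c 0 := hσ.1 c 0 hc le_rfl
  have hsup : supN r (seg r x s) ≤ σ c 0 :=
    (hbound s hs).trans (hanti (mem_Ici.2 le_rfl) (mem_Ici.2 hs) hs)
  have h1 := norm_fseg_le hf (seg_memC0 hx hs) hsup hR0
  exact h1.trans (mul_le_mul_of_nonneg_left (hbound s hs) (hf.2.2.2.1 _))

lemma sol_fseg_tail {r : ℝ} (hr : 0 < r) {f : (ℝ → Vec n) → Vec n} {L : ℝ → ℝ}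
    (hf : GoodRHS r f L) {x0 x : ℝ → Vec n} (hsol : IsSol r f x0 x ⊤)
    {σ : ℝ → ℝ → ℝ} (hσ : ClassKL σ) {c : ℝ} (hc : 0 ≤ c)
    (hbound : ∀ s : ℝ, 0 ≤ s → supN r (seg r x s) ≤ σ c s)
    {m u : ℝ} (hm : 0 ≤ m) (hmu : m ≤ u) :
    ‖f (seg r x u)‖ ≤ L (σ c 0) * σ c m := by
  have hanti : AntitoneOn (fun t => σ c t) (Ici 0) := (hσ.2.2 c hc).1
  exact (sol_facts hr hf hsol hσ hc hbound u (hm.trans hmu)).trans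
    (mul_le_mul_of_nonneg_left (hanti (mem_Ici.2 hm) (mem_Ici.2 (hm.trans hmu)) hmu)
      (hf.2.2.2.1 _))

lemma sobolev_estimate {r : ℝ} (hr : 0 < r) {p : ℝ≥0∞} (hp : 1 ≤ p)
    {f : (ℝ → Vec n) → Vec n} {L : ℝ → ℝ} (hf : GoodRHS r f L)
    {x0 x : ℝ → Vec n} (hx0 : MemW r p x0) (hsol : IsSol r f x0 x ⊤)
    {σ : ℝ → ℝ → ℝ} (hσ : ClassKL σ)
    (hbound : ∀ s : ℝ, 0 ≤ s → supN r (seg r x s) ≤ σ (sobNorm r p x0) s)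
    {t : ℝ} (ht : 0 ≤ t) :
    sobNorm r p (seg r x t) ≤ σ (sobNorm r p x0) t
      + (2 * r ^ (p.toReal)⁻¹) * L (σ (sobNorm r p x0) 0) * σ (sobNorm r p x0) (max (t - r) 0)
      + 2 * sobNorm r p x0 * (if t < r then 1 else 0) := by
  have hLnn := hf.2.2.2.1
  set c : ℝ := sobNorm r p x0 with hc_def
  set E' := eLpNorm (deriv x0) p (volume.restrict (Ioo (-r) 0)) with hE'def
  have hE'fin : E' < ⊤ := memW_eLpNorm_deriv_lt_top hr hx0
  have hc : 0 ≤ c := by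
    rw [hc_def]
    unfold sobNorm
    have := supN_nonneg r x0
    have := ENNReal.toReal_nonneg (a := eLpNorm (deriv x0) p (volume.restrict (Ioo (-r) 0)))
    linarith
  have hE'c : E'.toReal ≤ c := by
    rw [hc_def]
    unfold sobNorm
    have := supN_nonneg r x0
    rw [hE'def]
    linarith
  set M : ℝ := L (σ c 0) * σ c (max (t - r) 0) with hM_def
  have hσnn : 0 ≤ σ c (max (t - r) 0) := hσ.1 c _ hc (le_max_right _ _)
  have hM0 : 0 ≤ M := mul_nonneg (hLnn _) hσnn
  set Kr : ℝ := r ^ (p.toReal)⁻¹ with hKr_def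
  have hKr : 0 ≤ Kr := Real.rpow_nonneg hr.le _
  have hμ : (volume.restrict (Ioo (-r) 0)) univ = ENNReal.ofReal r := by
    rw [Measure.restrict_apply_univ, Real.volume_Ioo]
    norm_num
  have hrhs_ne : (ENNReal.ofReal r) ^ (p.toReal)⁻¹ * ENNReal.ofReal M ≠ ⊤ :=
    ENNReal.mul_ne_top (ENNReal.rpow_ne_top_of_nonneg (by positivity) ENNReal.ofReal_ne_top)
      ENNReal.ofReal_ne_top
  have hrhs_toReal : ((ENNReal.ofReal r) ^ (p.toReal)⁻¹ * ENNReal.ofReal M).toReal = Kr * M := by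
    rw [ENNReal.toReal_mul, ← ENNReal.toReal_rpow, ENNReal.toReal_ofReal hr.le,
      ENNReal.toReal_ofReal hM0]
  have hderseg : ∀ s : ℝ, deriv (seg r x t) s = deriv x (t + s) := fun s =>
    deriv_comp_const_add x t s
  have hderx : ∀ u : ℝ, 0 < u → deriv x u = f (seg r x u) := fun u hu =>
    (sol_hasDerivAt hr hf hsol hu).deriv
  have hderx0 : ∀ u ∈ Ioo (-r) (0:ℝ), deriv x u = deriv x0 u := by
    intro u hu
    apply Filter.EventuallyEq.deriv_eq
    filter_upwards [Ioo_mem_nhds hu.1 hu.2] with v hv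
    exact hsol.2.1 (Ioo_subset_Icc_self hv)
  have hFtail : ∀ u : ℝ, max (t - r) 0 ≤ u → ‖f (seg r x u)‖ ≤ M :=
    fun u hu => sol_fseg_tail hr hf hsol hσ hc hbound (le_max_right _ _) hu
  -- the derivative part of the norm
  set T := (eLpNorm (deriv (seg r x t)) p (volume.restrict (Ioo (-r) 0))).toReal with hT_def
  have hsupb := hbound t ht
  have hTbound : T ≤ Kr * M + c * (if t < r then 1 else 0) := by
    by_cases hcase : r ≤ t
    · -- no initial-data contribution
      have hae : ∀ᵐ s ∂(volume.restrict (Ioo (-r) 0)), ‖deriv (seg r x t) s‖ ≤ M := by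
        filter_upwards [ae_restrict_mem measurableSet_Ioo] with s hs
        have hpos : 0 < t + s := by linarith [hs.1, hs.2]
        rw [hderseg s, hderx _ hpos]
        exact hFtail _ (max_le (by linarith [hs.1]) hpos.le)
      have h1 := eLpNorm_le_of_ae_bound (p := p) hae
      rw [hμ] at h1
      have h2 := ENNReal.toReal_mono hrhs_ne h1
      rw [hrhs_toReal] at h2
      have : (if t < r then (1:ℝ) else 0) = 0 := by simp [not_lt.2 hcase]
      rw [hT_def]
      rw [this, mul_zero, add_zero]
      exact h2
    · -- t < r : split the interval
      push_neg at hcase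
      have hAsub : Ioo (-r) (-t) ⊆ Ioo (-r) 0 := Ioo_subset_Ioo le_rfl (by linarith)
      have hne : ∀ᵐ s ∂(volume.restrict (Ioo (-r) 0)), s ≠ -t := by
        apply ae_restrict_of_ae
        rw [ae_iff]
        have : {a : ℝ | ¬a ≠ -t} = {-t} := by ext a; simp
        rw [this]
        exact measure_singleton _
      have hsplit : deriv (seg r x t) =ᵐ[volume.restrict (Ioo (-r) 0)]
          ((Ioo (-r) (-t)).indicator (deriv (seg r x t)) +
           (Ioo (-t) 0).indicator (deriv (seg r x t))) := by
        filter_upwards [hne, ae_restrict_mem measurableSet_Ioo] with s hsne hsIoo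
        by_cases hlt : s < -t
        · rw [Pi.add_apply, Set.indicator_of_mem (show s ∈ Ioo (-r) (-t) from ⟨hsIoo.1, hlt⟩),
            Set.indicator_of_notMem (show s ∉ Ioo (-t) 0 from fun hmem => absurd hmem.1 (by linarith)),
            add_zero]
        · push_neg at hlt
          have hlt' : -t < s := lt_of_le_of_ne hlt (Ne.symm hsne)
          rw [Pi.add_apply, Set.indicator_of_mem (show s ∈ Ioo (-t) 0 from ⟨hlt', hsIoo.2⟩),
            Set.indicator_of_notMem (show s ∉ Ioo (-r) (-t) from fun hmem => absurd hmem.2 (by linarith)),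
            zero_add]
      have hmeasA : AEStronglyMeasurable ((Ioo (-r) (-t)).indicator (deriv (seg r x t)))
          (volume.restrict (Ioo (-r) 0)) :=
        (((measurable_deriv _).indicator measurableSet_Ioo).aestronglyMeasurable)
      have hmeasB : AEStronglyMeasurable ((Ioo (-t) 0).indicator (deriv (seg r x t)))
          (volume.restrict (Ioo (-r) 0)) :=
        (((measurable_deriv _).indicator measurableSet_Ioo).aestronglyMeasurable)
      have hadd : eLpNorm (deriv (seg r x t)) p (volume.restrict (Ioo (-r) 0)) ≤
          eLpNorm ((Ioo (-r) (-t)).indicator (deriv (seg r x t))) p (volume.restrict (Ioo (-r) 0)) +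
          eLpNorm ((Ioo (-t) 0).indicator (deriv (seg r x t))) p (volume.restrict (Ioo (-r) 0)) := by
        rw [eLpNorm_congr_ae hsplit]
        exact eLpNorm_add_le hmeasA hmeasB hp
      -- the A part
      have hApart : eLpNorm ((Ioo (-r) (-t)).indicator (deriv (seg r x t))) p
          (volume.restrict (Ioo (-r) 0)) ≤ E' := by
        rw [eLpNorm_indicator_eq_eLpNorm_restrict measurableSet_Ioo,
          Measure.restrict_restrict measurableSet_Ioo,
          inter_eq_self_of_subset_left hAsub]
        have hAeq : deriv (seg r x t) =ᵐ[volume.restrict (Ioo (-r) (-t))]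
            fun s => deriv x0 (t + s) := by
          rw [Filter.EventuallyEq, ae_restrict_iff' measurableSet_Ioo]
          apply Eventually.of_forall
          intro s hs
          rw [hderseg s, hderx0 (t + s) (show t + s ∈ Ioo (-r) 0 from
            ⟨by linarith [hs.1], by linarith [hs.2]⟩)]
        rw [eLpNorm_congr_ae hAeq]
        have hpre : (fun s : ℝ => t + s) ⁻¹' (Ioo (t - r) 0) = Ioo (-r) (-t) := by
          ext s
          simp only [mem_preimage, mem_Ioo]
          constructor <;> (intro hs; exact ⟨by linarith [hs.1], by linarith [hs.2]⟩)
        have hmap : volume.restrict (Ioo (t - r) 0) =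
            Measure.map (fun s : ℝ => t + s) (volume.restrict (Ioo (-r) (-t))) := by
          rw [← hpre, ← Measure.restrict_map (measurable_const_add t) measurableSet_Ioo,
            (measurePreserving_add_left volume t).map_eq]
        have htrans : eLpNorm (fun s => deriv x0 (t + s)) p (volume.restrict (Ioo (-r) (-t)))
            = eLpNorm (deriv x0) p (volume.restrict (Ioo (t - r) 0)) := by
          rw [hmap, eLpNorm_map_measure ((measurable_deriv x0).aestronglyMeasurable)
            (measurable_const_add t).aemeasurable]
          rfl
        rw [htrans, hE'def]
        exact eLpNorm_mono_measure _
          (Measure.restrict_mono (Ioo_subset_Ioo (by linarith) le_rfl) le_rfl)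
      -- the B part
      have hBae : ∀ᵐ s ∂(volume.restrict (Ioo (-r) 0)),
          ‖(Ioo (-t) 0).indicator (deriv (seg r x t)) s‖ ≤ M := by
        apply Eventually.of_forall
        intro s
        by_cases hmem : s ∈ Ioo (-t) 0
        · rw [Set.indicator_of_mem hmem]
          have hpos : 0 < t + s := by linarith [hmem.1]
          rw [hderseg s, hderx _ hpos]
          exact hFtail _ (max_le (by linarith [hmem.1]) hpos.le)
        · rw [Set.indicator_of_notMem hmem]
          simpa using hM0
      have hBpart := eLpNorm_le_of_ae_bound (p := p) hBae
      rw [hμ] at hBpart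
      -- combine
      have htot : eLpNorm (deriv (seg r x t)) p (volume.restrict (Ioo (-r) 0)) ≤
          E' + (ENNReal.ofReal r) ^ (p.toReal)⁻¹ * ENNReal.ofReal M :=
        hadd.trans (add_le_add hApart hBpart)
      have hne2 : E' + (ENNReal.ofReal r) ^ (p.toReal)⁻¹ * ENNReal.ofReal M ≠ ⊤ :=
        ENNReal.add_ne_top.2 ⟨hE'fin.ne, hrhs_ne⟩
      have h3 := ENNReal.toReal_mono hne2 htot
      rw [ENNReal.toReal_add hE'fin.ne hrhs_ne, hrhs_toReal] at h3
      rw [hT_def]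
      have : (if t < r then (1:ℝ) else 0) = 1 := by simp [hcase]
      rw [this, mul_one]
      calc (eLpNorm (deriv (seg r x t)) p (volume.restrict (Ioo (-r) 0))).toReal
          ≤ E'.toReal + Kr * M := h3
        _ ≤ Kr * M + c := by linarith
  -- conclude
  have hind : 0 ≤ (if t < r then (1:ℝ) else 0) := by split <;> norm_num
  have hsplitnorm : sobNorm r p (seg r x t) = supN r (seg r x t) + T := rfl
  rw [hsplitnorm]
  have h4 : c * (if t < r then (1:ℝ) else 0) ≤ 2 * c * (if t < r then 1 else 0) := by
    apply mul_le_mul_of_nonneg_right (by linarith) hind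
  have h5 : Kr * M ≤ 2 * Kr * M := by nlinarith
  have h6 : (2 * Kr) * L (σ c 0) * σ c (max (t - r) 0) = 2 * Kr * M := by
    rw [hM_def]; ring
  rw [hc_def] at *
  linarith [hsupb, hTbound, h4, h5, h6]

end MainEst
section HolderEst

variable {n : ℕ}

lemma sol_incr {r : ℝ} (hr : 0 < r) {f : (ℝ → Vec n) → Vec n} {L : ℝ → ℝ}
    (hf : GoodRHS r f L) {x0 x : ℝ → Vec n} (hsol : IsSol r f x0 x ⊤)
    {σ : ℝ → ℝ → ℝ} (hσ : ClassKL σ) {c : ℝ} (hc : 0 ≤ c)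
    (hbound : ∀ s : ℝ, 0 ≤ s → supN r (seg r x s) ≤ σ c s)
    {m a b : ℝ} (hm : 0 ≤ m) (hma : m ≤ a) (hab : a ≤ b) :
    ‖x b - x a‖ ≤ (L (σ c 0) * σ c m) * (b - a) :=
  sol_increment hr hf hsol (hm.trans hma) hab
    (fun s hs => sol_fseg_tail hr hf hsol hσ hc hbound hm (hma.trans hs.1))

lemma holder_estimate {r : ℝ} (hr : 0 < r) {α : ℝ} (hα0 : 0 < α) (hα1 : α ≤ 1)
    {f : (ℝ → Vec n) → Vec n} {L : ℝ → ℝ} (hf : GoodRHS r f L)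
    {x0 x : ℝ → Vec n} (hx0 : MemHol r α x0) (hsol : IsSol r f x0 x ⊤)
    {σ : ℝ → ℝ → ℝ} (hσ : ClassKL σ)
    (hbound : ∀ s : ℝ, 0 ≤ s → supN r (seg r x s) ≤ σ (holderNorm r α x0) s)
    {t : ℝ} (ht : 0 ≤ t) :
    holderNorm r α (seg r x t) ≤ σ (holderNorm r α x0) t
      + (2 * r ^ (1 - α)) * L (σ (holderNorm r α x0) 0) * σ (holderNorm r α x0) (max (t - r) 0)
      + 2 * holderNorm r α x0 * (if t < r then 1 else 0) := by
  have hLnn := hf.2.2.2.1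
  set c : ℝ := holderNorm r α x0 with hc_def
  have hc : 0 ≤ c := le_trans (supN_nonneg r x0) (le_max_left _ _)
  set M : ℝ := L (σ c 0) * σ c (max (t - r) 0) with hM_def
  have hσnn : 0 ≤ σ c (max (t - r) 0) := hσ.1 c _ hc (le_max_right _ _)
  have hM0 : 0 ≤ M := mul_nonneg (hLnn _) hσnn
  set Mr : ℝ := r ^ (1 - α) * M with hMr_def
  have hrp : (0:ℝ) < r ^ (1 - α) := Real.rpow_pos_of_pos hr _
  have hMr0 : 0 ≤ Mr := mul_nonneg hrp.le hM0
  have hval : ∀ w ∈ Icc (-r) (0:ℝ), x w = x0 w := hsol.2.1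
  -- Hölder bound for the initial condition
  have hrat : ∀ a ∈ Icc (-r) (0:ℝ), ∀ b ∈ Icc (-r) (0:ℝ), ‖x0 a - x0 b‖ ≤ c * |a - b| ^ α := by
    intro a ha b hb
    by_cases hab : a = b
    · simp [hab, Real.zero_rpow hα0.ne']
    · have h1 : ‖x0 a - x0 b‖ / |a - b| ^ α ≤ sSup (hRatios α (Icc (-r) 0) x0) :=
        le_csSup hx0.2 ⟨a, ha, b, hb, hab, rfl⟩
      have h2 : sSup (hRatios α (Icc (-r) 0) x0) ≤ c := le_max_right _ _
      have hpos : (0:ℝ) < |a - b| ^ α :=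
        Real.rpow_pos_of_pos (abs_pos.2 (sub_ne_zero.2 hab)) _
      rw [div_le_iff₀ hpos] at h1
      calc ‖x0 a - x0 b‖ ≤ sSup (hRatios α (Icc (-r) 0) x0) * |a - b| ^ α := h1
        _ ≤ c * |a - b| ^ α := mul_le_mul_of_nonneg_right h2 hpos.le
  have hind : (0:ℝ) ≤ (if t < r then (1:ℝ) else 0) := by split <;> norm_num
  set RT : ℝ := 2 * c * (if t < r then 1 else 0) + 2 * Mr with hRT_def
  have hRT0 : 0 ≤ RT := by
    have : 0 ≤ 2 * c * (if t < r then (1:ℝ) else 0) := mul_nonneg (by linarith) hind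
    linarith
  have hmax0 : (0:ℝ) ≤ max (t - r) 0 := le_max_right _ _
  -- the key incremental bound, for v < u in [-r,0]
  have key : ∀ u ∈ Icc (-r) (0:ℝ), ∀ v ∈ Icc (-r) (0:ℝ), v < u →
      ‖x (t + u) - x (t + v)‖ ≤ RT * (u - v) ^ α := by
    intro u hu v hv hvu
    have huv0 : (0:ℝ) < u - v := by linarith
    have huvr : u - v ≤ r := by linarith [hu.2, hv.1]
    have huvα : (0:ℝ) < (u - v) ^ α := Real.rpow_pos_of_pos huv0 _
    have hsplit_pow : ∀ w : ℝ, 0 < w → w ≤ r → w ≤ r ^ (1 - α) * w ^ α := by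
      intro w hw hwr
      have h1 : w = w ^ α * w ^ (1 - α) := by
        rw [← Real.rpow_add hw, add_sub_cancel, Real.rpow_one]
      have h2 : w ^ (1 - α) ≤ r ^ (1 - α) :=
        Real.rpow_le_rpow hw.le hwr (by linarith)
      calc w = w ^ α * w ^ (1 - α) := h1
        _ ≤ w ^ α * r ^ (1 - α) :=
            mul_le_mul_of_nonneg_left h2 (Real.rpow_pos_of_pos hw _).le
        _ = r ^ (1 - α) * w ^ α := mul_comm _ _
    by_cases hb0 : t + u ≤ 0
    · -- both in the initial interval; also t < r
      have htr : t < r := by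
        have h1 : -r ≤ v := hv.1
        nlinarith [hv.1]
      have hmem1 : t + u ∈ Icc (-r) (0:ℝ) := ⟨by linarith [hu.1], hb0⟩
      have hmem2 : t + v ∈ Icc (-r) (0:ℝ) := ⟨by linarith [hv.1], by linarith⟩
      rw [hval _ hmem1, hval _ hmem2]
      have h1 := hrat _ hmem1 _ hmem2
      have h2 : |t + u - (t + v)| = u - v := by
        rw [show t + u - (t + v) = u - v by ring, abs_of_pos huv0]
      rw [h2] at h1
      have hcRT : c ≤ RT := by
        rw [hRT_def]
        have : (if t < r then (1:ℝ) else 0) = 1 := by simp [htr]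
        rw [this]
        linarith
      exact h1.trans (mul_le_mul_of_nonneg_right hcRT huvα.le)
    · push_neg at hb0
      by_cases ha0 : 0 ≤ t + v
      · -- both in the solution interval
        have hmle : max (t - r) 0 ≤ t + v := max_le (by linarith [hv.1]) ha0
        have h1 := sol_incr hr hf hsol hσ hc hbound hmax0 hmle (by linarith : t + v ≤ t + u)
        have h2 : t + u - (t + v) = u - v := by ring
        rw [h2] at h1
        calc ‖x (t + u) - x (t + v)‖ ≤ M * (u - v) := h1
          _ ≤ M * (r ^ (1 - α) * (u - v) ^ α) :=
              mul_le_mul_of_nonneg_left (hsplit_pow _ huv0 huvr) hM0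
          _ = Mr * (u - v) ^ α := by rw [hMr_def]; ring
          _ ≤ RT * (u - v) ^ α := by
              apply mul_le_mul_of_nonneg_right _ huvα.le
              rw [hRT_def]
              have : 0 ≤ 2 * c * (if t < r then (1:ℝ) else 0) := mul_nonneg (by linarith) hind
              linarith
      · -- the mixed case
        push_neg at ha0
        have htr : t < r := by nlinarith [hv.1]
        have hmaxeq : max (t - r) 0 = 0 := max_eq_right (by linarith)
        have hbu : 0 < t + u := hb0
        have h1 : ‖x (t + u) - x 0‖ ≤ M * (t + u) := by
          have h1' := sol_incr hr hf hsol hσ hc hbound hmax0 hmaxeq.le hbu.le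
          rwa [sub_zero] at h1'
        have hmem2 : t + v ∈ Icc (-r) (0:ℝ) := ⟨by linarith [hv.1], ha0.le⟩
        have hmem0 : (0:ℝ) ∈ Icc (-r) (0:ℝ) := ⟨by linarith, le_rfl⟩
        have h2 : ‖x 0 - x (t + v)‖ ≤ c * (-(t + v)) ^ α := by
          rw [hval _ hmem0, hval _ hmem2]
          have := hrat _ hmem0 _ hmem2
          rwa [show |0 - (t + v)| = -(t + v) by rw [abs_of_pos (by linarith)]; ring] at this
        have htri : ‖x (t + u) - x (t + v)‖ ≤ ‖x (t + u) - x 0‖ + ‖x 0 - x (t + v)‖ :=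
          norm_sub_le_norm_sub_add_norm_sub _ _ _
        have h3 : M * (t + u) ≤ Mr * (u - v) ^ α := by
          have htu_r : t + u ≤ r := by linarith [hu.2]
          have h3a : M * (t + u) ≤ M * (r ^ (1 - α) * (t + u) ^ α) :=
            mul_le_mul_of_nonneg_left (hsplit_pow _ hbu htu_r) hM0
          have h3b : (t + u) ^ α ≤ (u - v) ^ α :=
            Real.rpow_le_rpow hbu.le (by linarith) hα0.le
          calc M * (t + u) ≤ M * (r ^ (1 - α) * (t + u) ^ α) := h3a
            _ = Mr * (t + u) ^ α := by rw [hMr_def]; ring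
            _ ≤ Mr * (u - v) ^ α := mul_le_mul_of_nonneg_left h3b hMr0
        have h4 : c * (-(t + v)) ^ α ≤ c * (u - v) ^ α := by
          apply mul_le_mul_of_nonneg_left _ hc
          exact Real.rpow_le_rpow (by linarith) (by linarith) hα0.le
        have hRTval : RT = 2 * c + 2 * Mr := by
          rw [hRT_def]
          have : (if t < r then (1:ℝ) else 0) = 1 := by simp [htr]
          rw [this]; ring
        have h5 : (Mr + c) * (u - v) ^ α ≤ RT * (u - v) ^ α := by
          apply mul_le_mul_of_nonneg_right _ huvα.le
          rw [hRTval]; linarith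
        calc ‖x (t + u) - x (t + v)‖ ≤ ‖x (t + u) - x 0‖ + ‖x 0 - x (t + v)‖ := htri
          _ ≤ M * (t + u) + c * (-(t + v)) ^ α := add_le_add h1 h2
          _ ≤ Mr * (u - v) ^ α + c * (u - v) ^ α := add_le_add h3 h4
          _ = (Mr + c) * (u - v) ^ α := by ring
          _ ≤ RT * (u - v) ^ α := h5
  -- bound on the Hölder ratios of the segment
  have hratio : sSup (hRatios α (Icc (-r) 0) (seg r x t)) ≤ RT := by
    apply Real.sSup_le _ hRT0
    rintro ρ ⟨u, hu, v, hv, hne, rfl⟩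
    have hpos : (0:ℝ) < |u - v| ^ α := Real.rpow_pos_of_pos (abs_pos.2 (sub_ne_zero.2 hne)) _
    rw [div_le_iff₀ hpos]
    rcases lt_or_gt_of_ne hne with hlt | hlt
    · have h1 := key v hv u hu hlt
      calc ‖seg r x t u - seg r x t v‖ = ‖x (t + v) - x (t + u)‖ := norm_sub_rev _ _
        _ ≤ RT * (v - u) ^ α := h1
        _ = RT * |u - v| ^ α := by rw [abs_sub_comm, abs_of_pos (by linarith)]
    · have h1 := key u hu v hv hlt
      calc ‖seg r x t u - seg r x t v‖ = ‖x (t + u) - x (t + v)‖ := rfl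
        _ ≤ RT * (u - v) ^ α := h1
        _ = RT * |u - v| ^ α := by rw [abs_of_pos (by linarith)]
  have hsup := hbound t ht
  have hσt : 0 ≤ σ c t := hσ.1 c t hc ht
  have h6 : (2 * r ^ (1 - α)) * L (σ c 0) * σ c (max (t - r) 0) = 2 * Mr := by
    rw [hMr_def, hM_def]; ring
  have hfinal : holderNorm r α (seg r x t) ≤
      σ c t + (2 * r ^ (1 - α)) * L (σ c 0) * σ c (max (t - r) 0)
        + 2 * c * (if t < r then 1 else 0) := by
    unfold holderNorm
    apply max_le
    · have hnn2 : 0 ≤ 2 * c * (if t < r then (1:ℝ) else 0) := mul_nonneg (by linarith) hind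
      rw [h6]
      linarith
    · rw [h6, hRT_def] at *
      linarith [hratio]
  exact hfinal

end HolderEst

/-- For a forward-complete system on `C⁰` and `X = W^{1,p}` or
`X = C^{0,1-1/p}` (`p ∈ (1,∞]`): (UGAS) ⇒ (Q-X), and (Q-X) ↔ (UGAS-X). -/
theorem stmt4 (n : ℕ) (hn : 1 ≤ n) (r : ℝ) (hr : 0 < r)
    (f : (ℝ → Vec n) → Vec n) (L : ℝ → ℝ) (hf : GoodRHS r f L)
    (p : ℝ≥0∞) (hp : 1 < p)
    (hFC : ∀ x0 : ℝ → Vec n, MemC0 r x0 → ∃ x : ℝ → Vec n, IsSol r f x0 x ⊤)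
    (MemX : (ℝ → Vec n) → Prop) (NormX : (ℝ → Vec n) → ℝ)
    (hX : (MemX = MemW r p ∧ NormX = sobNorm r p) ∨
          (MemX = MemHol r (hexp p) ∧ NormX = holderNorm r (hexp p))) :
    ((∃ σ : ℝ → ℝ → ℝ, ClassKL σ ∧ ∀ x0 x : ℝ → Vec n, MemC0 r x0 →
        IsSol r f x0 x ⊤ → ∀ t : ℝ, 0 ≤ t → supN r (seg r x t) ≤ σ (supN r x0) t) →
      (∃ σ : ℝ → ℝ → ℝ, ClassKL σ ∧ ∀ x0 x : ℝ → Vec n, MemX x0 →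
        IsSol r f x0 x ⊤ → ∀ t : ℝ, 0 ≤ t → supN r (seg r x t) ≤ σ (NormX x0) t)) ∧
    ((∃ σ : ℝ → ℝ → ℝ, ClassKL σ ∧ ∀ x0 x : ℝ → Vec n, MemX x0 →
        IsSol r f x0 x ⊤ → ∀ t : ℝ, 0 ≤ t → supN r (seg r x t) ≤ σ (NormX x0) t)
      ↔
     (∃ σ : ℝ → ℝ → ℝ, ClassKL σ ∧ ∀ x0 x : ℝ → Vec n, MemX x0 →
        IsSol r f x0 x ⊤ → ∀ t : ℝ, 0 ≤ t → NormX (seg r x t) ≤ σ (NormX x0) t)) := by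
  have hLmono := hf.2.2.1
  have hLnn := hf.2.2.2.1
  have hMemC0 : ∀ g : ℝ → Vec n, MemX g → MemC0 r g := by
    rcases hX with ⟨hm, hn'⟩ | ⟨hm, hn'⟩ <;> rw [hm] <;> intro g hg
    · exact memW_memC0 hg
    · exact hg.1
  have hsuple : ∀ g : ℝ → Vec n, supN r g ≤ NormX g := by
    rcases hX with ⟨hm, hn'⟩ | ⟨hm, hn'⟩ <;> rw [hn'] <;> intro g
    · exact supN_le_sobNorm r p g
    · exact supN_le_holderNorm r _ g
  constructor
  · -- (UGAS) implies (Q-X)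
    rintro ⟨σ, hσ, H⟩
    refine ⟨σ, hσ, ?_⟩
    intro x0 x hx0 hsol t ht
    have h1 := H x0 x (hMemC0 x0 hx0) hsol t ht
    have hmono := ((hσ.2.1 t ht).2.1).monotoneOn
    exact h1.trans (hmono (mem_Ici.2 (supN_nonneg r x0))
      (mem_Ici.2 (le_trans (supN_nonneg r x0) (hsuple x0))) (hsuple x0))
  constructor
  · -- (Q-X) implies (UGAS-X)
    rintro ⟨σ, hσ, H⟩
    obtain ⟨B, hB, hBle⟩ := KL_construct σ hσ L hLmono hLnn (2 * r ^ (p.toReal)⁻¹) r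
      (by positivity) hr
    refine ⟨B, hB, ?_⟩
    intro x0 x hx0 hsol t ht
    have hbound : ∀ s : ℝ, 0 ≤ s → supN r (seg r x s) ≤ σ (NormX x0) s :=
      fun s hs => H x0 x hx0 hsol s hs
    have hc : 0 ≤ NormX x0 := le_trans (supN_nonneg r x0) (hsuple x0)
    have hkey : NormX (seg r x t) ≤ σ (NormX x0) t
        + (2 * r ^ (p.toReal)⁻¹) * L (σ (NormX x0) 0) * σ (NormX x0) (max (t - r) 0)
        + 2 * NormX x0 * (if t < r then 1 else 0) := by
      rcases hX with ⟨hm, hn'⟩ | ⟨hm, hn'⟩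
      · rw [hn'] at hbound ⊢
        rw [hm] at hx0
        exact sobolev_estimate hr hp.le hf hx0 hsol hσ hbound ht
      · rw [hn'] at hbound ⊢
        rw [hm] at hx0
        have hα0 : 0 < hexp p := by
          unfold hexp
          rcases eq_or_ne p ⊤ with hptop | hptop
          · simp [hptop]
          · have h1 : 1 < p.toReal := by
              have := (ENNReal.toReal_lt_toReal ENNReal.one_ne_top hptop).2 hp
              simpa using this
            have h2 : p.toReal⁻¹ < 1 := by
              rw [inv_lt_one_iff₀]
              right; exact h1
            linarith
        have hα1 : hexp p ≤ 1 := by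
          unfold hexp
          have : 0 ≤ (p.toReal)⁻¹ := by positivity
          linarith
        have hexp_eq : 1 - hexp p = (p.toReal)⁻¹ := by unfold hexp; ring
        have h2 := holder_estimate hr hα0 hα1 hf hx0 hsol hσ hbound ht
        rwa [hexp_eq] at h2
    exact hkey.trans (hBle (NormX x0) t hc ht)
  · -- (UGAS-X) implies (Q-X)
    rintro ⟨σ, hσ, H⟩
    exact ⟨σ, hσ, fun x0 x hx0 hsol t ht => (hsuple _).trans (H x0 x hx0 hsol t ht)⟩
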